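/- Let (A,B) be a nondegenerate m×n bimatrix game in which A and Bᵀ are entrywise nonnegative and have no zero column, and let k ∈ {1,…,m+n}. Then there do not exist a vertex x of P and three pairwise distinct vertices y, y', y'' of Q such that each of the pairs (x,y), (x,y'), (x,y'') has all labels in {1,…,m+n} \ {k}. Symmetrically, there do not exist a vertex y of Q and three pairwise distinct vertices x, x', x'' of P such that each of the pairs (x,y), (x',y), (x'',y) has all labels in {1,…,m+n} \ {k}. -/

import Mathlib

open Matrix BigOperators

/-- Membership in the polytope `P = {x : x ≥ 0, Bᵀx ≤ 1}`. -/
def MemP {m n : ℕ} (B : Matrix (Fin m) (Fin n) ℝ) (x : Fin m → ℝ) : Prop :=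
  (∀ i, 0 ≤ x i) ∧ ∀ j, (Bᵀ *ᵥ x) j ≤ 1

/-- Membership in the polytope `Q = {y : Ay ≤ 1, y ≥ 0}`. -/
def MemQ {m n : ℕ} (A : Matrix (Fin m) (Fin n) ℝ) (y : Fin n → ℝ) : Prop :=
  (∀ j, 0 ≤ y j) ∧ ∀ i, (A *ᵥ y) i ≤ 1

/-- `x ∈ P` has label `k` (labels are `Fin m ⊕ Fin n`, for `{1,…,m+n}`):
label `i` if `x_i = 0`, label `m+j` if `(Bᵀx)_j = 1`. -/
def LabelP {m n : ℕ} (B : Matrix (Fin m) (Fin n) ℝ) (x : Fin m → ℝ) :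
    Fin m ⊕ Fin n → Prop
  | Sum.inl i => x i = 0
  | Sum.inr j => (Bᵀ *ᵥ x) j = 1

/-- `y ∈ Q` has label `k`: label `i` if `(Ay)_i = 1`, label `m+j` if `y_j = 0`. -/
def LabelQ {m n : ℕ} (A : Matrix (Fin m) (Fin n) ℝ) (y : Fin n → ℝ) :
    Fin m ⊕ Fin n → Prop
  | Sum.inl i => (A *ᵥ y) i = 1
  | Sum.inr j => y j = 0

/-- The game `(A,B)` is nondegenerate: no point of `P` has more than `m` labels
and no point of `Q` has more than `n` labels. -/
def Nondegenerate {m n : ℕ} (A B : Matrix (Fin m) (Fin n) ℝ) : Prop :=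
  (∀ x, MemP B x → {k | LabelP B x k}.ncard ≤ m) ∧
  (∀ y, MemQ A y → {k | LabelQ A y k}.ncard ≤ n)

/-- A vertex of `P`: a point of `P` with exactly `m` labels. -/
def VertexP {m n : ℕ} (B : Matrix (Fin m) (Fin n) ℝ) (x : Fin m → ℝ) : Prop :=
  MemP B x ∧ {k | LabelP B x k}.ncard = m

/-- A vertex of `Q`: a point of `Q` with exactly `n` labels. -/
def VertexQ {m n : ℕ} (A : Matrix (Fin m) (Fin n) ℝ) (y : Fin n → ℝ) : Prop :=
  MemQ A y ∧ {k | LabelQ A y k}.ncard = n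


def slackQ {m n : ℕ} (A : Matrix (Fin m) (Fin n) ℝ) : (Fin m ⊕ Fin n) → (Fin n → ℝ) → ℝ
  | Sum.inl i => fun y => (A *ᵥ y) i - 1
  | Sum.inr j => fun y => - y j

def linQ {m n : ℕ} (A : Matrix (Fin m) (Fin n) ℝ) : (Fin m ⊕ Fin n) → (Fin n → ℝ) → ℝ
  | Sum.inl i => fun d => (A *ᵥ d) i
  | Sum.inr j => fun d => - d j

def slackP {m n : ℕ} (B : Matrix (Fin m) (Fin n) ℝ) : (Fin m ⊕ Fin n) → (Fin m → ℝ) → ℝ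
  | Sum.inl i => fun x => - x i
  | Sum.inr j => fun x => (Bᵀ *ᵥ x) j - 1

def linP {m n : ℕ} (B : Matrix (Fin m) (Fin n) ℝ) : (Fin m ⊕ Fin n) → (Fin m → ℝ) → ℝ
  | Sum.inl i => fun d => - d i
  | Sum.inr j => fun d => (Bᵀ *ᵥ d) j

variable {m n : ℕ} (A B : Matrix (Fin m) (Fin n) ℝ)

lemma haffQ : ∀ l z d (t : ℝ), slackQ A l (z + t • d) = slackQ A l z + t * linQ A l d := by
  rintro (i | j) z d t
  · simp [slackQ, linQ, Matrix.mulVec_add, Matrix.mulVec_smul]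
    ring
  · simp [slackQ, linQ]
    ring

lemma haffP : ∀ l z d (t : ℝ), slackP B l (z + t • d) = slackP B l z + t * linP B l d := by
  rintro (i | j) z d t
  · simp [slackP, linP]
    ring
  · simp [slackP, linP, Matrix.mulVec_add, Matrix.mulVec_smul]
    ring

lemma hlinQ : ∀ l, IsLinearMap ℝ (linQ A l) := by
  rintro (i | j)
  · exact ⟨fun x y => by simp [linQ, Matrix.mulVec_add], fun c x => by simp [linQ, Matrix.mulVec_smul]⟩
  · exact ⟨fun x y => by simp [linQ]; ring, fun c x => by simp [linQ]⟩

lemma hlinP : ∀ l, IsLinearMap ℝ (linP B l) := by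
  rintro (i | j)
  · exact ⟨fun x y => by simp [linP]; ring, fun c x => by simp [linP]⟩
  · exact ⟨fun x y => by simp [linP, Matrix.mulVec_add], fun c x => by simp [linP, Matrix.mulVec_smul]⟩

lemma HposQ (hA : ∀ i j, 0 ≤ A i j) (hAcol : ∀ j, ∃ i, A i j ≠ 0) :
    ∀ d : Fin n → ℝ, d ≠ 0 → ∃ l, 0 < linQ A l d := by
  intro d hd
  by_cases hneg : ∃ j, d j < 0
  · obtain ⟨j, hj⟩ := hneg
    exact ⟨Sum.inr j, by simp [linQ]; linarith⟩
  · push_neg at hneg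
    obtain ⟨j, hj⟩ := Function.ne_iff.mp hd
    have hjpos : 0 < d j := lt_of_le_of_ne (hneg j) (Ne.symm hj)
    obtain ⟨i, hi⟩ := hAcol j
    have hipos : 0 < A i j := lt_of_le_of_ne (hA i j) (Ne.symm hi)
    refine ⟨Sum.inl i, ?_⟩
    simp only [linQ, Matrix.mulVec, dotProduct]
    apply Finset.sum_pos'
    · intro j' _
      exact mul_nonneg (hA i j') (hneg j')
    · exact ⟨j, Finset.mem_univ j, mul_pos hipos hjpos⟩

lemma HposP (hBT : ∀ j i, 0 ≤ Bᵀ j i) (hBTcol : ∀ i, ∃ j, Bᵀ j i ≠ 0) :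
    ∀ d : Fin m → ℝ, d ≠ 0 → ∃ l, 0 < linP B l d := by
  intro d hd
  by_cases hneg : ∃ i, d i < 0
  · obtain ⟨i, hi⟩ := hneg
    exact ⟨Sum.inl i, by simp [linP]; linarith⟩
  · push_neg at hneg
    obtain ⟨i, hi⟩ := Function.ne_iff.mp hd
    have hipos : 0 < d i := lt_of_le_of_ne (hneg i) (Ne.symm hi)
    obtain ⟨j, hj⟩ := hBTcol i
    have hjpos : 0 < Bᵀ j i := lt_of_le_of_ne (hBT j i) (Ne.symm hj)
    refine ⟨Sum.inr j, ?_⟩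
    simp only [linP, Matrix.mulVec, dotProduct]
    apply Finset.sum_pos'
    · intro i' _
      exact mul_nonneg (hBT j i') (hneg i')
    · exact ⟨i, Finset.mem_univ i, mul_pos hjpos hipos⟩

lemma labelQ_eq (y : Fin n → ℝ) : {l | LabelQ A y l} = {l | slackQ A l y = 0} := by
  ext (i | j) <;> simp [LabelQ, slackQ, sub_eq_zero, neg_eq_zero]

lemma memQ_iff (y : Fin n → ℝ) : MemQ A y ↔ ∀ l, slackQ A l y ≤ 0 := by
  constructor
  · rintro ⟨h1, h2⟩ (i | j)
    · simpa [slackQ, sub_nonpos] using h2 i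
    · simpa [slackQ] using h1 j
  · intro h
    refine ⟨fun j => by simpa [slackQ] using h (Sum.inr j),
      fun i => by have := h (Sum.inl i); simpa [slackQ, sub_nonpos] using this⟩

lemma labelP_eq (x : Fin m → ℝ) : {l | LabelP B x l} = {l | slackP B l x = 0} := by
  ext (i | j) <;> simp [LabelP, slackP, sub_eq_zero, neg_eq_zero]

lemma memP_iff (x : Fin m → ℝ) : MemP B x ↔ ∀ l, slackP B l x ≤ 0 := by
  constructor
  · rintro ⟨h1, h2⟩ (i | j)
    · simpa [slackP] using h1 i
    · simpa [slackP, sub_nonpos] using h2 j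
  · intro h
    refine ⟨fun i => by simpa [slackP] using h (Sum.inl i),
      fun j => by have := h (Sum.inr j); simpa [slackP, sub_nonpos] using this⟩


section Abstract

variable {ι : Type*} [Fintype ι] {N : ℕ}

lemma keyK (slack lin : ι → (Fin N → ℝ) → ℝ)
    (haff : ∀ l z d (t : ℝ), slack l (z + t • d) = slack l z + t * lin l d)
    (Hpos : ∀ d : Fin N → ℝ, d ≠ 0 → ∃ l, 0 < lin l d)
    (nval : ℕ)
    (hnd : ∀ z, (∀ l, slack l z ≤ 0) → {l | slack l z = 0}.ncard ≤ nval)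
    (z : Fin N → ℝ) (hz : ∀ l, slack l z ≤ 0)
    (d : Fin N → ℝ) (hd : d ≠ 0)
    (hker : ∀ l, slack l z = 0 → lin l d = 0)
    (hcard : nval ≤ {l | slack l z = 0}.ncard) : False := by
  classical
  obtain ⟨l₀, hl₀⟩ := Hpos d hd
  set D : Finset ι := Finset.univ.filter (fun l => 0 < lin l d) with hD
  have hDne : D.Nonempty := ⟨l₀, by simp [hD, hl₀]⟩
  set f : ι → ℝ := fun l => (-slack l z) / lin l d with hf
  have ht0 : 0 ≤ D.inf' hDne f := by
    apply Finset.le_inf'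
    intro l hl
    have hl' : 0 < lin l d := by simpa [hD] using hl
    exact div_nonneg (by linarith [hz l]) hl'.le
  set t := D.inf' hDne f with ht
  have hfeas : ∀ l, slack l (z + t • d) ≤ 0 := by
    intro l
    rw [haff]
    by_cases hpl : 0 < lin l d
    · have h1 : t ≤ f l := Finset.inf'_le _ (by simp [hD, hpl])
      have h2 : t * lin l d ≤ f l * lin l d := mul_le_mul_of_nonneg_right h1 hpl.le
      have h3 : f l * lin l d = -slack l z := by
        rw [hf]; field_simp
      linarith
    · push_neg at hpl
      nlinarith [hz l, mul_nonneg ht0 (neg_nonneg.mpr hpl)]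
  obtain ⟨l₁, hl₁D, hl₁⟩ := Finset.exists_mem_eq_inf' hDne f
  have hl₁pos : 0 < lin l₁ d := by simpa [hD] using hl₁D
  have hl₁tight : slack l₁ (z + t • d) = 0 := by
    rw [haff, ht, hl₁, hf]
    field_simp
    ring
  have hl₁not : l₁ ∉ {l | slack l z = 0} := by
    intro h
    have := hker l₁ h
    simp only [Set.mem_setOf_eq] at h
    linarith
  have hsub : insert l₁ {l | slack l z = 0} ⊆ {l | slack l (z + t • d) = 0} := by
    intro l hl
    rcases Set.mem_insert_iff.mp hl with rfl | hl
    · exact hl₁tight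
    · simp only [Set.mem_setOf_eq] at hl ⊢
      rw [haff, hl, hker l hl]; ring
  have hcard2 := Set.ncard_le_ncard hsub (Set.toFinite _)
  rw [Set.ncard_insert_of_notMem hl₁not (Set.toFinite _)] at hcard2
  have := hnd (z + t • d) hfeas
  omega

lemma absMain (slack lin : ι → (Fin N → ℝ) → ℝ)
    (haff : ∀ l z d (t : ℝ), slack l (z + t • d) = slack l z + t * lin l d)
    (hlin : ∀ l, IsLinearMap ℝ (lin l))
    (Hpos : ∀ d : Fin N → ℝ, d ≠ 0 → ∃ l, 0 < lin l d)
    (nval : ℕ)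
    (hnd : ∀ z, (∀ l, slack l z ≤ 0) → {l | slack l z = 0}.ncard ≤ nval)
    (S : Set ι) (hS : nval ≤ S.ncard + 1)
    (z z' z'' : Fin N → ℝ)
    (hz : ∀ l, slack l z ≤ 0) (hz' : ∀ l, slack l z' ≤ 0) (hz'' : ∀ l, slack l z'' ≤ 0)
    (hcz : {l | slack l z = 0}.ncard = nval)
    (hcz' : {l | slack l z' = 0}.ncard = nval)
    (hcz'' : {l | slack l z'' = 0}.ncard = nval)
    (hSz : ∀ l ∈ S, slack l z = 0) (hSz' : ∀ l ∈ S, slack l z' = 0)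
    (hSz'' : ∀ l ∈ S, slack l z'' = 0)
    (h1 : z ≠ z') (h2 : z ≠ z'') (h3 : z' ≠ z'') : False := by
  classical
  have step : ∀ l (w w' : Fin N → ℝ), slack l w' = slack l w + lin l (w' - w) := by
    intro l w w'
    have := haff l w (w' - w) 1
    rw [one_smul, add_sub_cancel] at this
    simpa using this
  -- no two distinct feasible points with the same (full-size) label set
  have nodup : ∀ w w' : Fin N → ℝ, (∀ l, slack l w ≤ 0) → w ≠ w' →
      {l | slack l w = 0} = {l | slack l w' = 0} →
      {l | slack l w = 0}.ncard = nval → False := by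
    intro w w' hw hne heq hc
    refine keyK slack lin haff Hpos nval hnd w hw (w' - w)
      (sub_ne_zero.mpr (Ne.symm hne)) ?_ hc.ge
    intro l hl
    have hl' : slack l w' = 0 := by
      have : l ∈ {l | slack l w' = 0} := heq ▸ hl
      exact this
    have := step l w w'
    rw [hl, hl'] at this
    linarith
  have getA : ∀ w w₂ : Fin N → ℝ, (∀ l, slack l w ≤ 0) → w ≠ w₂ →
      {l | slack l w = 0}.ncard = nval → {l | slack l w₂ = 0}.ncard = nval →
      (∀ l ∈ S, slack l w₂ = 0) →
      ∃ a, slack a w = 0 ∧ a ∉ S := by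
    intro w w₂ hw hne hcw hcw₂ hSw₂
    by_contra h
    push_neg at h
    have hsub : {l | slack l w = 0} ⊆ {l | slack l w₂ = 0} := by
      intro l hl
      exact hSw₂ l (h l hl)
    have heq := Set.eq_of_subset_of_ncard_le hsub (by rw [hcw, hcw₂]) (Set.toFinite _)
    exact nodup w w₂ hw hne heq hcw
  obtain ⟨a, haz, haS⟩ := getA z z' hz h1 hcz hcz' hSz'
  obtain ⟨b, hbz, hbS⟩ := getA z' z'' hz' h3 hcz' hcz'' hSz''
  obtain ⟨cc, hccz, hccS⟩ := getA z'' z hz'' (Ne.symm h2) hcz'' hcz hSz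
  have labEq : ∀ (w : Fin N → ℝ) (e : ι), slack e w = 0 → e ∉ S →
      (∀ l ∈ S, slack l w = 0) → {l | slack l w = 0}.ncard = nval →
      {l | slack l w = 0} = insert e S := by
    intro w e hew heS hSw hcw
    refine (Set.eq_of_subset_of_ncard_le ?_ ?_ (Set.toFinite _)).symm
    · intro l hl
      rcases Set.mem_insert_iff.mp hl with rfl | hl
      · exact hew
      · exact hSw l hl
    · rw [hcw, Set.ncard_insert_of_notMem heS (Set.toFinite _)]
      exact hS
  have hLz := labEq z a haz haS hSz hcz
  have hLz' := labEq z' b hbz hbS hSz' hcz'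
  have hLz'' := labEq z'' cc hccz hccS hSz'' hcz''
  -- pairwise distinct extra labels
  have hab : a ≠ b := by
    rintro rfl
    exact nodup z z' hz h1 (hLz.trans hLz'.symm) hcz
  have hbc : b ≠ cc := by
    rintro rfl
    exact nodup z' z'' hz' h3 (hLz'.trans hLz''.symm) hcz'
  have hac : a ≠ cc := by
    rintro rfl
    exact nodup z z'' hz h2 (hLz.trans hLz''.symm) hcz
  -- strict slacks
  have notlab : ∀ (w : Fin N → ℝ) (e e' : ι), (∀ l, slack l w ≤ 0) →
      {l | slack l w = 0} = insert e' S → e ≠ e' → e ∉ S → slack e w < 0 := by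
    intro w e e' hw hLw hee' heS
    rcases lt_or_eq_of_le (hw e) with h | h
    · exact h
    · exfalso
      have : e ∈ {l | slack l w = 0} := h
      rw [hLw] at this
      rcases Set.mem_insert_iff.mp this with h' | h'
      · exact hee' h'
      · exact heS h'
  have haz' : slack a z' < 0 := notlab z' a b hz' hLz' hab haS
  have haz'' : slack a z'' < 0 := notlab z'' a cc hz'' hLz'' hac haS
  have hbz0 : slack b z < 0 := notlab z b a hz hLz hab.symm hbS
  have hbz'' : slack b z'' < 0 := notlab z'' b cc hz'' hLz'' hbc hbS
  have hccz0 : slack cc z < 0 := notlab z cc a hz hLz hac.symm hccS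
  have hccz' : slack cc z' < 0 := notlab z' cc b hz' hLz' hbc.symm hccS
  -- directions
  set d1 : Fin N → ℝ := z' - z with hd1
  set d2 : Fin N → ℝ := z'' - z with hd2
  have hd1ne : d1 ≠ 0 := sub_ne_zero.mpr (Ne.symm h1)
  have hd2ne : d2 ≠ 0 := sub_ne_zero.mpr (Ne.symm h2)
  have hS1 : ∀ l ∈ S, lin l d1 = 0 := by
    intro l hl
    have := step l z z'
    rw [hSz l hl, hSz' l hl] at this
    linarith
  have hS2 : ∀ l ∈ S, lin l d2 = 0 := by
    intro l hl
    have := step l z z''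
    rw [hSz l hl, hSz'' l hl] at this
    linarith
  have hker1 : lin a d1 ≠ 0 := by
    intro h
    refine keyK slack lin haff Hpos nval hnd z hz d1 hd1ne ?_ hcz.ge
    intro l hl
    have : l ∈ insert a S := hLz ▸ hl
    rcases Set.mem_insert_iff.mp this with rfl | hl'
    · exact h
    · exact hS1 l hl'
  have hker2 : lin a d2 ≠ 0 := by
    intro h
    refine keyK slack lin haff Hpos nval hnd z hz d2 hd2ne ?_ hcz.ge
    intro l hl
    have : l ∈ insert a S := hLz ▸ hl
    rcases Set.mem_insert_iff.mp this with rfl | hl'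
    · exact h
    · exact hS2 l hl'
  set c₀ : ℝ := lin a d2 / lin a d1 with hc₀
  set d : Fin N → ℝ := d2 - c₀ • d1 with hd
  have hlind : ∀ l, lin l d = lin l d2 - c₀ * lin l d1 := by
    intro l
    rw [hd, (hlin l).map_sub, (hlin l).map_smul]
    simp [smul_eq_mul]
  have hdzero : d = 0 := by
    by_contra hdne
    refine keyK slack lin haff Hpos nval hnd z hz d hdne ?_ hcz.ge
    intro l hl
    have : l ∈ insert a S := hLz ▸ hl
    rcases Set.mem_insert_iff.mp this with rfl | hl'
    · rw [hlind, hc₀]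
      field_simp
      ring
    · rw [hlind, hS1 l hl', hS2 l hl']; ring
  have hlin2 : ∀ l, lin l d2 = c₀ * lin l d1 := by
    intro l
    have := hlind l
    rw [hdzero, (hlin l).map_zero] at this
    linarith
  -- scalar analysis
  have hα : lin a d1 < 0 := by
    have := step a z z'
    rw [haz] at this
    -- slack a z' = 0 + lin a d1
    rcases lt_trichotomy (lin a d1) 0 with h | h | h
    · exact h
    · exact absurd h hker1
    · linarith
  have hc0pos : 0 < c₀ := by
    have := step a z z''
    rw [haz, hlin2 a] at this
    -- slack a z'' = c₀ * lin a d1 < 0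
    nlinarith
  have hβ : slack b z + lin b d1 = 0 := by
    have := step b z z'
    rw [hbz] at this
    linarith
  have hc0lt1 : c₀ < 1 := by
    have h2'' := step b z z''
    rw [hlin2 b] at h2''
    -- slack b z'' = slack b z + c₀ * lin b d1 < 0
    nlinarith
  have hγeq : slack cc z + c₀ * lin cc d1 = 0 := by
    have := step cc z z''
    rw [hccz, hlin2 cc] at this
    linarith
  have hγlt : slack cc z + lin cc d1 < 0 := by
    have := step cc z z'
    linarith
  nlinarith [hccz0, hγeq, hγlt, hc0pos, hc0lt1]

end Abstract

-- S cardinality: for a label set L with ncard = c and k, the complement set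
lemma Scard {m n : ℕ} (L : Set (Fin m ⊕ Fin n)) (k : Fin m ⊕ Fin n) (c : ℕ) (hc : L.ncard = c) :
    m + n ≤ (Set.univ \ (L ∪ {k})).ncard + c + 1 := by
  have h1 : (L ∪ {k}).ncard ≤ c + 1 := by
    have := Set.ncard_union_le L {k}
    simpa [hc] using this
  have h2 : (Set.univ \ (L ∪ {k})).ncard = (Set.univ : Set (Fin m ⊕ Fin n)).ncard - (L ∪ {k}).ncard :=
    Set.ncard_diff (Set.subset_univ _) (Set.toFinite _)
  have h3 : (Set.univ : Set (Fin m ⊕ Fin n)).ncard = m + n := by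
    simp [Set.ncard_univ]
  have h4 : (L ∪ {k}).ncard ≤ m + n := by
    have := Set.ncard_le_ncard (Set.subset_univ (L ∪ {k})) (Set.toFinite _)
    omega
  omega

theorem stmt5 {m n : ℕ} (A B : Matrix (Fin m) (Fin n) ℝ)
    (hA : ∀ i j, 0 ≤ A i j) (hBT : ∀ j i, 0 ≤ Bᵀ j i)
    (hAcol : ∀ j, ∃ i, A i j ≠ 0) (hBTcol : ∀ i, ∃ j, Bᵀ j i ≠ 0)
    (hnd : Nondegenerate A B) (k : Fin m ⊕ Fin n) :
    (¬ ∃ (x : Fin m → ℝ) (y y' y'' : Fin n → ℝ),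
        VertexP B x ∧ VertexQ A y ∧ VertexQ A y' ∧ VertexQ A y'' ∧
        y ≠ y' ∧ y ≠ y'' ∧ y' ≠ y'' ∧
        (∀ l, l ≠ k → LabelP B x l ∨ LabelQ A y l) ∧
        (∀ l, l ≠ k → LabelP B x l ∨ LabelQ A y' l) ∧
        (∀ l, l ≠ k → LabelP B x l ∨ LabelQ A y'' l)) ∧
    (¬ ∃ (y : Fin n → ℝ) (x x' x'' : Fin m → ℝ),
        VertexQ A y ∧ VertexP B x ∧ VertexP B x' ∧ VertexP B x'' ∧
        x ≠ x' ∧ x ≠ x'' ∧ x' ≠ x'' ∧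
        (∀ l, l ≠ k → LabelP B x l ∨ LabelQ A y l) ∧
        (∀ l, l ≠ k → LabelP B x' l ∨ LabelQ A y l) ∧
        (∀ l, l ≠ k → LabelP B x'' l ∨ LabelQ A y l)) := by
  have hndQ : ∀ z, (∀ l, slackQ A l z ≤ 0) → {l | slackQ A l z = 0}.ncard ≤ n := by
    intro z hzf
    have := hnd.2 z ((memQ_iff A z).mpr hzf)
    rwa [labelQ_eq] at this
  have hndP : ∀ z, (∀ l, slackP B l z ≤ 0) → {l | slackP B l z = 0}.ncard ≤ m := by
    intro z hzf
    have := hnd.1 z ((memP_iff B z).mpr hzf)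
    rwa [labelP_eq] at this
  constructor
  · rintro ⟨x, y, y', y'', hx, hy, hy', hy'', hne1, hne2, hne3, hcov, hcov', hcov''⟩
    set S : Set (Fin m ⊕ Fin n) := Set.univ \ ({l | LabelP B x l} ∪ {k}) with hSdef
    have hScard : n ≤ S.ncard + 1 := by
      have := Scard {l | LabelP B x l} k m hx.2
      rw [hSdef]
      omega
    have hSlab : ∀ (w : Fin n → ℝ), (∀ l, l ≠ k → LabelP B x l ∨ LabelQ A w l) →
        ∀ l ∈ S, slackQ A l w = 0 := by
      intro w hcw l hl
      obtain ⟨-, hl2⟩ := hl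
      simp only [Set.mem_union, Set.mem_setOf_eq, Set.mem_singleton_iff, not_or] at hl2
      have := (hcw l hl2.2).resolve_left hl2.1
      have h2 : l ∈ {l | slackQ A l w = 0} := (labelQ_eq A w) ▸ (this : l ∈ {l | LabelQ A w l})
      exact h2
    have hcard : ∀ (w : Fin n → ℝ), VertexQ A w → {l | slackQ A l w = 0}.ncard = n := by
      intro w hw
      rw [← labelQ_eq]
      exact hw.2
    exact absMain (slackQ A) (linQ A) (haffQ A) (hlinQ A) (HposQ A hA hAcol) n hndQ
      S hScard y y' y''
      ((memQ_iff A y).mp hy.1) ((memQ_iff A y').mp hy'.1) ((memQ_iff A y'').mp hy''.1)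
      (hcard y hy) (hcard y' hy') (hcard y'' hy'')
      (hSlab y hcov) (hSlab y' hcov') (hSlab y'' hcov'')
      hne1 hne2 hne3
  · rintro ⟨y, x, x', x'', hy, hx, hx', hx'', hne1, hne2, hne3, hcov, hcov', hcov''⟩
    set S : Set (Fin m ⊕ Fin n) := Set.univ \ ({l | LabelQ A y l} ∪ {k}) with hSdef
    have hScard : m ≤ S.ncard + 1 := by
      have := Scard {l | LabelQ A y l} k n hy.2
      rw [hSdef]
      omega
    have hSlab : ∀ (w : Fin m → ℝ), (∀ l, l ≠ k → LabelP B w l ∨ LabelQ A y l) →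
        ∀ l ∈ S, slackP B l w = 0 := by
      intro w hcw l hl
      obtain ⟨-, hl2⟩ := hl
      simp only [Set.mem_union, Set.mem_setOf_eq, Set.mem_singleton_iff, not_or] at hl2
      have := (hcw l hl2.2).resolve_right hl2.1
      have h2 : l ∈ {l | slackP B l w = 0} := (labelP_eq B w) ▸ (this : l ∈ {l | LabelP B w l})
      exact h2
    have hcard : ∀ (w : Fin m → ℝ), VertexP B w → {l | slackP B l w = 0}.ncard = m := by
      intro w hw
      rw [← labelP_eq]
      exact hw.2
    exact absMain (slackP B) (linP B) (haffP B) (hlinP B) (HposP B hBT hBTcol) m hndP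
      S hScard x x' x''
      ((memP_iff B x).mp hx.1) ((memP_iff B x').mp hx'.1) ((memP_iff B x'').mp hx''.1)
      (hcard x hx) (hcard x' hx') (hcard x'' hx'')
      (hSlab x hcov) (hSlab x' hcov') (hSlab x'' hcov'')
      hne1 hne2 hne3
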